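/- Let α > 0 and let {ε_k}_{k∈ℕ} be nonnegative reals with ∑_{k=0}^∞ ε_k² < +∞. Let {x^k} ⊆ ℝ^n satisfy (H1°): F(x^{k+1}) − F(x^k) ≤ −α‖x^{k+1} − x^k‖² + ε_k² for each k. Suppose some limiting point x* of {x^k} (i.e. the limit of some subsequence) is a local minimum of F. Then the whole sequence {x^k} converges to x*. -/

import Mathlib

open Filter Finset Set

section Stmt8Aux

private lemma coord_abs_le_norm {n : ℕ} (v : EuclideanSpace ℝ (Fin n)) (i : Fin n) :
    |v i| ≤ ‖v‖ := by
  rw [EuclideanSpace.norm_eq]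
  have h1 : |v i| = Real.sqrt (|v i| ^ 2) := by rw [Real.sqrt_sq_eq_abs, abs_abs]
  rw [h1]
  apply Real.sqrt_le_sqrt
  have := Finset.single_le_sum (f := fun j => ‖v j‖ ^ 2) (fun j _ => by positivity)
    (Finset.mem_univ i)
  simpa [Real.norm_eq_abs] using this

private lemma hD_affine (q c e t : ℝ) (h : 0 < c + t * e) :
    HasDerivAt (fun s => (c + s * e) ^ q) (q * e * (c + t * e) ^ (q - 1)) t := by
  have h1 : HasDerivAt (fun s : ℝ => c + s * e) e t := by
    simpa using ((hasDerivAt_id t).mul_const e).const_add c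
  have h2 := Real.hasDerivAt_rpow_const (x := c + t * e) (p := q) (Or.inl h.ne')
  have h3 := h2.comp t h1
  exact h3.congr_deriv (by ring)

private lemma second_deriv_nonneg' {f f' f'' : ℝ → ℝ} {a : ℝ} (h : IsLocalMin f a)
    (hd1 : ∀ᶠ t in nhds a, HasDerivAt f (f' t) t)
    (hd2 : ∀ᶠ t in nhds a, HasDerivAt f' (f'' t) t)
    (hc : ContinuousAt f'' a) : 0 ≤ f'' a := by
  by_contra h0
  push_neg at h0
  have hcont : ∀ᶠ t in nhds a, f'' t < 0 := hc.eventually_lt_const h0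
  have hball := hd1.and (hd2.and (hcont.and h))
  rw [Metric.eventually_nhds_iff] at hball
  obtain ⟨δ, hδ, hprop⟩ := hball
  set I : Set ℝ := Set.Ioo (a - δ) (a + δ) with hI
  have hmemI : ∀ t ∈ I, dist t a < δ := by
    intro t ht
    rw [Real.dist_eq, abs_lt]
    constructor <;> [linarith [ht.1]; linarith [ht.2]]
  have hanti : StrictAntiOn f' I := by
    apply strictAntiOn_of_deriv_neg (convex_Ioo _ _)
    · intro t ht
      exact ((hprop (hmemI t ht)).2.1).continuousAt.continuousWithinAt
    · intro t ht
      rw [interior_Ioo] at ht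
      rw [(hprop (hmemI t ht)).2.1.deriv]
      exact (hprop (hmemI t ht)).2.2.1
  have hfa : f' a = 0 := h.hasDerivAt_eq_zero (hprop (by simp [hδ])).1
  have haI : a ∈ I := by constructor <;> linarith
  have hbI : a - δ / 2 ∈ I := by constructor <;> linarith
  have hpos : ∀ t ∈ Set.Ioo (a - δ / 2) a, 0 < f' t := by
    intro t ht
    have htI : t ∈ I := ⟨by linarith [ht.1], by linarith [ht.2]⟩
    have := hanti htI haI ht.2
    rwa [hfa] at this
  have hmono : StrictMonoOn f (Set.Icc (a - δ / 2) a) := by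
    apply strictMonoOn_of_deriv_pos (convex_Icc _ _)
    · intro t ht
      have htI : t ∈ I := ⟨by linarith [ht.1], by linarith [ht.2, hδ]⟩
      exact ((hprop (hmemI t htI)).1).continuousAt.continuousWithinAt
    · intro t ht
      rw [interior_Icc] at ht
      have htI : t ∈ I := ⟨by linarith [ht.1], by linarith [ht.2]⟩
      rw [(hprop (hmemI t htI)).1.deriv]
      exact hpos t ht
  have h1 : f (a - δ / 2) < f a :=
    hmono ⟨le_refl _, by linarith⟩ ⟨by linarith, le_refl _⟩ (by linarith)
  have h2 : f a ≤ f (a - δ / 2) := (hprop (hmemI _ hbI)).2.2.2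
  linarith

private lemma isLocalMin_slice {E : Type*} [NormedAddCommGroup E] [NormedSpace ℝ E]
    {g : E → ℝ} {w : E} (h : IsLocalMin g w) (z d : E) (t₀ : ℝ) (hw : z + t₀ • d = w) :
    IsLocalMin (fun t : ℝ => g (z + t • d)) t₀ := by
  subst hw
  have hc : Continuous fun t : ℝ => z + t • d := by continuity
  exact IsMinFilter.comp_tendsto h (hc.tendsto t₀)

private lemma abs_affine {zi di t : ℝ} (hz : zi ≠ 0) (h2 : 2 * |di| < |zi|)
    (ht : t ∈ Set.Ioo (-1 : ℝ) 2) :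
    |zi + t * di| = |zi| + t * (Real.sign zi * di) ∧
      0 < |zi| + t * (Real.sign zi * di) := by
  have htd : |t * di| < |zi| := by
    rw [abs_mul]
    have h1 : |t| ≤ 2 := by rw [abs_le]; constructor <;> [linarith [ht.1]; linarith [ht.2]]
    nlinarith [abs_nonneg di, abs_nonneg t]
  rcases lt_or_gt_of_ne hz with hneg | hpos
  · rw [Real.sign_of_neg hneg]
    have habs : |zi| = -zi := abs_of_neg hneg
    have h3 : zi + t * di < 0 := by
      have := le_abs_self (t * di); nlinarith [htd]
    rw [abs_of_neg h3]
    constructor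
    · rw [habs]; ring
    · rw [habs]; nlinarith
  · rw [Real.sign_of_pos hpos]
    have habs : |zi| = zi := abs_of_pos hpos
    have h3 : 0 < zi + t * di := by
      have := neg_abs_le (t * di); nlinarith [htd]
    rw [abs_of_pos h3]
    constructor
    · rw [habs]; ring
    · rw [habs]; nlinarith

private lemma norm_add_smul_sq {m : ℕ} (u v : EuclideanSpace ℝ (Fin m)) (t : ℝ) :
    ‖u + t • v‖ ^ 2 = ‖v‖ ^ 2 * t ^ 2 + (2 * inner ℝ u v) * t + ‖u‖ ^ 2 := by
  rw [norm_add_sq_real, real_inner_smul_right, norm_smul]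
  simp [Real.norm_eq_abs, mul_pow, sq_abs]
  ring

private lemma one_dim {ι : Type*} (D : Finset ι) (p lam : ℝ) (hp0 : 0 < p) (hp1 : p < 1)
    (hlam : 0 < lam) (c e : ι → ℝ) (hD : D.Nonempty) (he : ∀ i ∈ D, e i ≠ 0)
    (hpos : ∀ i ∈ D, ∀ t ∈ Set.Ioo (-1 : ℝ) 2, 0 < c i + t * e i)
    (a bb cc : ℝ)
    (h0 : IsLocalMin (fun t => a * t ^ 2 + bb * t + cc + lam * ∑ i ∈ D, (c i + t * e i) ^ p) 0)
    (h1 : IsLocalMin (fun t => a * t ^ 2 + bb * t + cc + lam * ∑ i ∈ D, (c i + t * e i) ^ p) 1) :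
    False := by
  set I : Set ℝ := Set.Ioo (-1 : ℝ) 2 with hIdef
  have hIopen : IsOpen I := isOpen_Ioo
  have h0I : (0 : ℝ) ∈ I := by constructor <;> norm_num
  have h1I : (1 : ℝ) ∈ I := by constructor <;> norm_num
  set Ψ : ℝ → ℝ := fun t => a * t ^ 2 + bb * t + cc + lam * ∑ i ∈ D, (c i + t * e i) ^ p with hΨ
  set Ψ1 : ℝ → ℝ := fun t => 2 * a * t + bb + lam * ∑ i ∈ D, (p * e i) * (c i + t * e i) ^ (p - 1) with hΨ1
  set Ψ2 : ℝ → ℝ := fun t => 2 * a + lam * ∑ i ∈ D, (p * (p - 1) * (e i) ^ 2) * (c i + t * e i) ^ (p - 2) with hΨ2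
  set Ψ3 : ℝ → ℝ := fun t => lam * ∑ i ∈ D, (p * (p - 1) * (p - 2) * (e i) ^ 3) * (c i + t * e i) ^ (p - 3) with hΨ3
  set Ψ4 : ℝ → ℝ := fun t => lam * ∑ i ∈ D, (p * (p - 1) * (p - 2) * (p - 3) * (e i) ^ 4) * (c i + t * e i) ^ (p - 4) with hΨ4
  have hdΨ : ∀ t ∈ I, HasDerivAt Ψ (Ψ1 t) t := by
    intro t ht
    have hsum : HasDerivAt (fun s => ∑ i ∈ D, (c i + s * e i) ^ p)
        (∑ i ∈ D, (p * e i) * (c i + t * e i) ^ (p - 1)) t := by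
      apply HasDerivAt.fun_sum
      intro i hi
      have := hD_affine p (c i) (e i) t (hpos i hi t ht)
      exact this.congr_deriv (by ring)
    have hq : HasDerivAt (fun s : ℝ => a * s ^ 2 + bb * s + cc) (2 * a * t + bb) t := by
      have h1 : HasDerivAt (fun s : ℝ => a * s ^ 2) (a * (2 * t)) t := by
        simpa using (((hasDerivAt_pow 2 t)).const_mul a)
      have h2 : HasDerivAt (fun s : ℝ => bb * s) bb t := by
        simpa using (hasDerivAt_id t).const_mul bb
      have := (h1.add h2).add_const cc
      exact this.congr_deriv (by ring)
    exact hq.add (hsum.const_mul lam)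
  have hdΨ1 : ∀ t ∈ I, HasDerivAt Ψ1 (Ψ2 t) t := by
    intro t ht
    have hsum : HasDerivAt (fun s => ∑ i ∈ D, (p * e i) * (c i + s * e i) ^ (p - 1))
        (∑ i ∈ D, (p * (p - 1) * (e i) ^ 2) * (c i + t * e i) ^ (p - 2)) t := by
      apply HasDerivAt.fun_sum
      intro i hi
      have := (hD_affine (p - 1) (c i) (e i) t (hpos i hi t ht)).const_mul (p * e i)
      have he2 : p - 1 - 1 = p - 2 := by ring
      rw [he2] at this
      exact this.congr_deriv (by ring)
    have hq : HasDerivAt (fun s : ℝ => 2 * a * s + bb) (2 * a) t := by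
      simpa using ((hasDerivAt_id t).const_mul (2 * a)).add_const bb
    exact hq.add (hsum.const_mul lam)
  have hdΨ2 : ∀ t ∈ I, HasDerivAt Ψ2 (Ψ3 t) t := by
    intro t ht
    have hsum : HasDerivAt (fun s => ∑ i ∈ D, (p * (p - 1) * (e i) ^ 2) * (c i + s * e i) ^ (p - 2))
        (∑ i ∈ D, (p * (p - 1) * (p - 2) * (e i) ^ 3) * (c i + t * e i) ^ (p - 3)) t := by
      apply HasDerivAt.fun_sum
      intro i hi
      have := (hD_affine (p - 2) (c i) (e i) t (hpos i hi t ht)).const_mul (p * (p - 1) * (e i) ^ 2)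
      have he2 : p - 2 - 1 = p - 3 := by ring
      rw [he2] at this
      exact this.congr_deriv (by ring)
    have := (hasDerivAt_const t (2 * a)).add (hsum.const_mul lam)
    exact this.congr_deriv (zero_add _)
  have hdΨ3 : ∀ t ∈ I, HasDerivAt Ψ3 (Ψ4 t) t := by
    intro t ht
    have hsum : HasDerivAt
        (fun s => ∑ i ∈ D, (p * (p - 1) * (p - 2) * (e i) ^ 3) * (c i + s * e i) ^ (p - 3))
        (∑ i ∈ D, (p * (p - 1) * (p - 2) * (p - 3) * (e i) ^ 4) * (c i + t * e i) ^ (p - 4)) t := by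
      apply HasDerivAt.fun_sum
      intro i hi
      have := (hD_affine (p - 3) (c i) (e i) t
        (hpos i hi t ht)).const_mul (p * (p - 1) * (p - 2) * (e i) ^ 3)
      have he2 : p - 3 - 1 = p - 4 := by ring
      rw [he2] at this
      exact this.congr_deriv (by ring)
    exact hsum.const_mul lam
  have hΨ10 : Ψ1 0 = 0 := h0.hasDerivAt_eq_zero (hdΨ 0 h0I)
  have hΨ11 : Ψ1 1 = 0 := h1.hasDerivAt_eq_zero (hdΨ 1 h1I)
  have hev : ∀ s ∈ I, ∀ᶠ t in nhds s, t ∈ I := fun s hs => hIopen.eventually_mem hs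
  have hΨ20 : 0 ≤ Ψ2 0 :=
    second_deriv_nonneg' h0 ((hev 0 h0I).mono fun t ht => hdΨ t ht)
      ((hev 0 h0I).mono fun t ht => hdΨ1 t ht) (hdΨ2 0 h0I).continuousAt
  have hΨ21 : 0 ≤ Ψ2 1 :=
    second_deriv_nonneg' h1 ((hev 1 h1I).mono fun t ht => hdΨ t ht)
      ((hev 1 h1I).mono fun t ht => hdΨ1 t ht) (hdΨ2 1 h1I).continuousAt
  have hΨ4neg : ∀ t ∈ I, Ψ4 t < 0 := by
    intro t ht
    have hterm : ∀ i ∈ D,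
        (p * (p - 1) * (p - 2) * (p - 3) * (e i) ^ 4) * (c i + t * e i) ^ (p - 4) < 0 := by
      intro i hi
      have hco : p * (p - 1) * (p - 2) * (p - 3) < 0 := by
        have h23 : 0 < (p - 2) * (p - 3) := mul_pos_of_neg_of_neg (by linarith) (by linarith)
        have h123 : (p - 1) * ((p - 2) * (p - 3)) < 0 := mul_neg_of_neg_of_pos (by linarith) h23
        have := mul_neg_of_pos_of_neg hp0 h123
        nlinarith [this]
      have he4 : 0 < (e i) ^ 4 := by
        have := pow_ne_zero 4 (he i hi)
        exact lt_of_le_of_ne (by positivity) (Ne.symm this)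
      have hrp : 0 < (c i + t * e i) ^ (p - 4) := Real.rpow_pos_of_pos (hpos i hi t ht) _
      have : p * (p - 1) * (p - 2) * (p - 3) * (e i) ^ 4 < 0 := mul_neg_of_neg_of_pos hco he4
      exact mul_neg_of_neg_of_pos this hrp
    have := Finset.sum_neg hterm hD
    exact mul_neg_of_pos_of_neg hlam this
  have hsub : Set.Icc (0 : ℝ) 1 ⊆ I := by
    intro t ht
    exact ⟨by linarith [ht.1], by linarith [ht.2]⟩
  have hconc : StrictConcaveOn ℝ (Set.Icc (0 : ℝ) 1) Ψ2 := by
    apply strictConcaveOn_of_deriv2_neg (convex_Icc 0 1)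
    · intro t ht
      exact (hdΨ2 t (hsub ht)).continuousAt.continuousWithinAt
    · intro t ht
      rw [interior_Icc] at ht
      have htI : t ∈ I := hsub (Set.Ioo_subset_Icc_self ht)
      have hde : deriv Ψ2 =ᶠ[nhds t] Ψ3 := (hev t htI).mono fun s hs => (hdΨ2 s hs).deriv
      have hit : deriv^[2] Ψ2 t = deriv Ψ3 t := by
        simp only [Function.iterate_succ, Function.iterate_zero, Function.comp_apply, id]
        exact hde.deriv_eq
      rw [hit, (hdΨ3 t htI).deriv]
      exact hΨ4neg t htI
  have hΨ2pos : ∀ t ∈ Set.Ioo (0 : ℝ) 1, 0 < Ψ2 t := by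
    intro t ht
    have h01 : (0 : ℝ) ∈ Set.Icc (0 : ℝ) 1 := by norm_num
    have h11 : (1 : ℝ) ∈ Set.Icc (0 : ℝ) 1 := by norm_num
    have := hconc.2 h01 h11 (by norm_num : (0 : ℝ) ≠ 1)
      (by linarith [ht.2] : (0 : ℝ) < 1 - t) ht.1 (by ring : (1 - t) + t = 1)
    simp only [smul_eq_mul, mul_zero, mul_one, zero_add] at this
    have hA : 0 ≤ (1 - t) * Ψ2 0 := mul_nonneg (by linarith [ht.2]) hΨ20
    have hB : 0 ≤ t * Ψ2 1 := mul_nonneg (le_of_lt ht.1) hΨ21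
    linarith
  have hmono : StrictMonoOn Ψ1 (Set.Icc (0 : ℝ) 1) := by
    apply strictMonoOn_of_deriv_pos (convex_Icc 0 1)
    · intro t ht
      exact (hdΨ1 t (hsub ht)).continuousAt.continuousWithinAt
    · intro t ht
      rw [interior_Icc] at ht
      rw [(hdΨ1 t (hsub (Set.Ioo_subset_Icc_self ht))).deriv]
      exact hΨ2pos t ht
  have := hmono (by norm_num : (0 : ℝ) ∈ Set.Icc (0 : ℝ) 1)
    (by norm_num : (1 : ℝ) ∈ Set.Icc (0 : ℝ) 1) zero_lt_one
  rw [hΨ10, hΨ11] at this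
  exact lt_irrefl 0 this

private lemma no_two_close_minima {n m : ℕ} {p lam : ℝ} (hp0 : 0 < p) (hp1 : p < 1)
    (hlam : 0 < lam) (A : EuclideanSpace ℝ (Fin n) →L[ℝ] EuclideanSpace ℝ (Fin m))
    (b : EuclideanSpace ℝ (Fin m)) (F : EuclideanSpace ℝ (Fin n) → ℝ)
    (hF : ∀ v, F v = ‖A v - b‖ ^ 2 + lam * ∑ i, |v i| ^ p)
    {z y : EuclideanSpace ℝ (Fin n)} (hz : IsLocalMin F z) (hy : IsLocalMin F y)
    (hne : y ≠ z) (hd2 : ∀ i, y i - z i ≠ 0 → 2 * |y i - z i| < |z i|) : False := by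
  classical
  set d : EuclideanSpace ℝ (Fin n) := y - z with hd
  have hdi : ∀ i, d i = y i - z i := fun i => rfl
  set D : Finset (Fin n) := univ.filter fun i => d i ≠ 0 with hD
  set c : Fin n → ℝ := fun i => |z i| with hc
  set e : Fin n → ℝ := fun i => Real.sign (z i) * d i with he
  have hzi : ∀ i ∈ D, z i ≠ 0 ∧ 2 * |d i| < |z i| := by
    intro i hi
    rw [hD, Finset.mem_filter] at hi
    have h2 := hd2 i (by rw [← hdi]; exact hi.2)
    rw [← hdi] at h2
    refine ⟨?_, h2⟩
    intro hz0
    rw [hz0] at h2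
    simp at h2
    have := abs_nonneg (d i)
    linarith
  have hkey : ∀ i ∈ D, ∀ t ∈ Set.Ioo (-1 : ℝ) 2,
      |z i + t * d i| = c i + t * e i ∧ 0 < c i + t * e i := by
    intro i hi t ht
    exact abs_affine (hzi i hi).1 (hzi i hi).2 ht
  set aa : ℝ := ‖A d‖ ^ 2 with haa
  set bb : ℝ := 2 * inner ℝ (A z - b) (A d) with hbb
  set cc : ℝ := ‖A z - b‖ ^ 2 + lam * ∑ i ∈ univ.filter (fun i => ¬ d i ≠ 0), |z i| ^ p with hcc
  have hform : ∀ t ∈ Set.Ioo (-1 : ℝ) 2,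
      F (z + t • d) = aa * t ^ 2 + bb * t + cc + lam * ∑ i ∈ D, (c i + t * e i) ^ p := by
    intro t ht
    rw [hF]
    have hqd : A (z + t • d) - b = (A z - b) + t • (A d) := by
      rw [map_add, map_smul]; abel
    rw [hqd, norm_add_smul_sq]
    have hsum : ∑ i, |(z + t • d) i| ^ p =
        (∑ i ∈ D, (c i + t * e i) ^ p)
          + ∑ i ∈ univ.filter (fun i => ¬ d i ≠ 0), |z i| ^ p := by
      have hco : ∀ i : Fin n, (z + t • d) i = z i + t * d i := fun i => rfl
      rw [← Finset.sum_filter_add_sum_filter_not univ (fun i => d i ≠ 0)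
        (fun i => |(z + t • d) i| ^ p)]
      congr 1
      · apply Finset.sum_congr rfl
        intro i hi
        rw [hco i, (hkey i hi t ht).1]
      · apply Finset.sum_congr rfl
        intro i hi
        simp only [Finset.mem_filter] at hi
        push_neg at hi
        rw [hco i, hi.2, mul_zero, add_zero]
    rw [hsum]
    ring
  have hdne : d ≠ 0 := sub_ne_zero.2 hne
  have hDne : D.Nonempty := by
    by_contra hcon
    rw [Finset.not_nonempty_iff_eq_empty] at hcon
    apply hdne
    ext i
    by_contra hi0
    have : i ∈ D := by rw [hD, Finset.mem_filter]; exact ⟨Finset.mem_univ i, hi0⟩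
    rw [hcon] at this
    exact absurd this (Finset.notMem_empty i)
  have heD : ∀ i ∈ D, e i ≠ 0 := by
    intro i hi
    have hz0 := (hzi i hi).1
    have hd0 : d i ≠ 0 := by
      rw [hD, Finset.mem_filter] at hi; exact hi.2
    rw [he]
    apply mul_ne_zero _ hd0
    rcases lt_or_gt_of_ne hz0 with h | h
    · rw [Real.sign_of_neg h]; norm_num
    · rw [Real.sign_of_pos h]; norm_num
  have hIopen : IsOpen (Set.Ioo (-1 : ℝ) 2) := isOpen_Ioo
  have h0I : (0 : ℝ) ∈ Set.Ioo (-1 : ℝ) 2 := by constructor <;> norm_num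
  have h1I : (1 : ℝ) ∈ Set.Ioo (-1 : ℝ) 2 := by constructor <;> norm_num
  have hloc0 : IsLocalMin (fun t : ℝ => F (z + t • d)) 0 :=
    isLocalMin_slice hz z d 0 (by simp)
  have hloc1 : IsLocalMin (fun t : ℝ => F (z + t • d)) 1 :=
    isLocalMin_slice hy z d 1 (by rw [hd]; simp)
  have heq0 : (fun t : ℝ => F (z + t • d)) =ᶠ[nhds (0 : ℝ)]
      fun t => aa * t ^ 2 + bb * t + cc + lam * ∑ i ∈ D, (c i + t * e i) ^ p :=
    (hIopen.eventually_mem h0I).mono fun t ht => hform t ht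
  have heq1 : (fun t : ℝ => F (z + t • d)) =ᶠ[nhds (1 : ℝ)]
      fun t => aa * t ^ 2 + bb * t + cc + lam * ∑ i ∈ D, (c i + t * e i) ^ p :=
    (hIopen.eventually_mem h1I).mono fun t ht => hform t ht
  exact one_dim D p lam hp0 hp1 hlam c e hDne heD
    (fun i hi t ht => (hkey i hi t ht).2) aa bb cc
    (hloc0.congr heq0) (hloc1.congr heq1)

private lemma coord_bound {n m : ℕ} {p lam : ℝ} (hp0 : 0 < p) (hp1 : p < 1)
    (hlam : 0 < lam) (A : EuclideanSpace ℝ (Fin n) →L[ℝ] EuclideanSpace ℝ (Fin m))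
    (b : EuclideanSpace ℝ (Fin m)) (F : EuclideanSpace ℝ (Fin n) → ℝ)
    (hF : ∀ v, F v = ‖A v - b‖ ^ 2 + lam * ∑ i, |v i| ^ p)
    {w : EuclideanSpace ℝ (Fin n)} (hw : IsLocalMin F w) (i : Fin n) (hwi : w i ≠ 0) :
    lam * p * |w i| ^ (p - 1) ≤ 2 * ‖A‖ * ‖A w - b‖ := by
  classical
  set u : EuclideanSpace ℝ (Fin n) := EuclideanSpace.single i (1 : ℝ) with hu
  set aa : ℝ := ‖A u‖ ^ 2 with haa
  set bb : ℝ := 2 * inner ℝ (A w - b) (A u) with hbb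
  set cc : ℝ := ‖A w - b‖ ^ 2 + lam * ∑ j ∈ univ.erase i, |w j| ^ p with hcc
  have hform : ∀ t : ℝ, F (w + t • u) = aa * t ^ 2 + bb * t + cc + lam * |w i + t| ^ p := by
    intro t
    rw [hF]
    have hqd : A (w + t • u) - b = (A w - b) + t • (A u) := by
      rw [map_add, map_smul]; abel
    rw [hqd, norm_add_smul_sq]
    have hco : ∀ j : Fin n, (w + t • u) j = w j + t * (EuclideanSpace.single i (1:ℝ)) j :=
      fun j => rfl
    have hsum : ∑ j, |(w + t • u) j| ^ p = |w i + t| ^ p + ∑ j ∈ univ.erase i, |w j| ^ p := by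
      rw [← Finset.add_sum_erase univ (fun j => |(w + t • u) j| ^ p) (Finset.mem_univ i)]
      congr 1
      · rw [hco i, EuclideanSpace.single_apply, if_pos rfl, mul_one]
      · apply Finset.sum_congr rfl
        intro j hj
        have hji : j ≠ i := Finset.ne_of_mem_erase hj
        rw [hco j, EuclideanSpace.single_apply, if_neg hji, mul_zero, add_zero]
    rw [hsum]
    ring
  have hloc : IsLocalMin (fun t : ℝ => F (w + t • u)) 0 :=
    isLocalMin_slice hw w u 0 (by simp)
  have habs : 0 < |w i| := abs_pos.2 hwi
  have heqa : ∀ᶠ t in nhds (0 : ℝ), |w i + t| = |w i| + t * Real.sign (w i) := by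
    rw [Metric.eventually_nhds_iff]
    refine ⟨|w i|, habs, ?_⟩
    intro t ht
    rw [Real.dist_eq, sub_zero] at ht
    rcases lt_or_gt_of_ne hwi with hneg | hpos
    · rw [Real.sign_of_neg hneg, abs_of_neg hneg]
      have h3 : w i + t < 0 := by
        have := le_abs_self t; have := abs_of_neg hneg; nlinarith [ht]
      rw [abs_of_neg h3]; ring
    · rw [Real.sign_of_pos hpos, abs_of_pos hpos]
      have h3 : 0 < w i + t := by
        have := neg_abs_le t; have := abs_of_pos hpos; nlinarith [ht]
      rw [abs_of_pos h3]; ring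
  have hder : HasDerivAt (fun t : ℝ => F (w + t • u))
      (bb + lam * (p * Real.sign (w i) * |w i| ^ (p - 1))) 0 := by
    have h1 : HasDerivAt (fun t : ℝ => (|w i| + t * Real.sign (w i)) ^ p)
        (p * Real.sign (w i) * |w i| ^ (p - 1)) 0 := by
      have := hD_affine p (|w i|) (Real.sign (w i)) 0 (by simpa using habs)
      simpa using this
    have h2 : HasDerivAt (fun t : ℝ => |w i + t| ^ p)
        (p * Real.sign (w i) * |w i| ^ (p - 1)) 0 := by
      apply h1.congr_of_eventuallyEq
      exact heqa.mono fun t ht => by dsimp only; rw [ht]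
    have hq : HasDerivAt (fun t : ℝ => aa * t ^ 2 + bb * t + cc) (bb) 0 := by
      have ha : HasDerivAt (fun t : ℝ => aa * t ^ 2) (aa * (2 * 0)) 0 := by
        simpa using ((hasDerivAt_pow 2 (0 : ℝ))).const_mul aa
      have hb : HasDerivAt (fun t : ℝ => bb * t) bb 0 := by
        simpa using (hasDerivAt_id (0 : ℝ)).const_mul bb
      have := (ha.add hb).add_const cc
      exact this.congr_deriv (by ring)
    have htot := hq.add (h2.const_mul lam)
    have hfun : (fun t : ℝ => F (w + t • u)) =
        fun t => aa * t ^ 2 + bb * t + cc + lam * |w i + t| ^ p := funext hform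
    rw [hfun]
    exact htot.congr_deriv (by ring)
  have hzero : bb + lam * (p * Real.sign (w i) * |w i| ^ (p - 1)) = 0 :=
    hloc.hasDerivAt_eq_zero hder
  have hbbabs : |bb| ≤ 2 * ‖A‖ * ‖A w - b‖ := by
    rw [hbb, abs_mul]
    have h1 : |(inner ℝ (A w - b) (A u) : ℝ)| ≤ ‖A w - b‖ * ‖A u‖ := abs_real_inner_le_norm _ _
    have h2 : ‖A u‖ ≤ ‖A‖ := by
      have := A.le_opNorm u
      rwa [hu, EuclideanSpace.norm_single, norm_one, mul_one] at this
    have h3 : ‖A w - b‖ * ‖A u‖ ≤ ‖A w - b‖ * ‖A‖ := by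
      apply mul_le_mul_of_nonneg_left h2 (norm_nonneg _)
    simp only [abs_two]
    nlinarith [norm_nonneg (A w - b)]
  have hrp : 0 < |w i| ^ (p - 1) := Real.rpow_pos_of_pos habs _
  have hsig : |Real.sign (w i)| = 1 := by
    rcases lt_or_gt_of_ne hwi with h | h
    · rw [Real.sign_of_neg h]; norm_num
    · rw [Real.sign_of_pos h]; norm_num
  have h6 : lam * (p * Real.sign (w i) * |w i| ^ (p - 1)) = -bb := by linarith [hzero]
  have h7 : lam * p * |w i| ^ (p - 1) = |bb| := by
    have h8 := congrArg abs h6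
    rw [abs_neg] at h8
    rw [← h8, abs_mul, abs_mul, abs_mul, hsig, abs_of_pos hlam, abs_of_pos hp0,
      abs_of_pos hrp]
    ring
  rw [h7]
  exact hbbabs

end Stmt8Aux

set_option maxHeartbeats 2000000 in
/-- Theorem 4.2(i): if `α > 0`, `∑ ε_k² < ∞`, `{x^k}` satisfies (H1°)
`F(x^{k+1}) - F(x^k) ≤ -α ‖x^{k+1} - x^k‖² + ε_k²`, and some limiting point `x*` of `{x^k}`
(the limit of some subsequence) is a local minimum of the ℓ_p regularized least squares
objective `F`, then the whole sequence `{x^k}` converges to `x*`. -/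
theorem stmt8 (n m : ℕ) (p lam : ℝ) (hp0 : 0 < p) (hp1 : p < 1) (hlam : 0 < lam)
    (A : EuclideanSpace ℝ (Fin n) →L[ℝ] EuclideanSpace ℝ (Fin m))
    (b : EuclideanSpace ℝ (Fin m))
    (F : EuclideanSpace ℝ (Fin n) → ℝ)
    (hF : ∀ x, F x = ‖A x - b‖ ^ 2 + lam * ∑ i, |x i| ^ p)
    (α : ℝ) (hα : 0 < α) (ε : ℕ → ℝ) (hε : ∀ k, 0 ≤ ε k)
    (hsum : Summable fun k => ε k ^ 2)
    (x : ℕ → EuclideanSpace ℝ (Fin n))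
    (hH1 : ∀ k, F (x (k + 1)) - F (x k) ≤ -α * ‖x (k + 1) - x k‖ ^ 2 + ε k ^ 2)
    (xs : EuclideanSpace ℝ (Fin n))
    (hsub : ∃ φ : ℕ → ℕ, StrictMono φ ∧ Filter.Tendsto (x ∘ φ) Filter.atTop (nhds xs))
    (hmin : IsLocalMin F xs) :
    Filter.Tendsto x Filter.atTop (nhds xs) := by
  classical
  obtain ⟨φ, hφ, hxφ⟩ := hsub
  have hFc : Continuous F := by
    have hFe : F = fun v => ‖A v - b‖ ^ 2 + lam * ∑ i, |v i| ^ p := funext hF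
    rw [hFe]
    apply Continuous.add
    · exact (A.continuous.sub continuous_const).norm.pow 2
    · apply Continuous.mul continuous_const
      apply continuous_finset_sum
      intro i _
      have h1 : Continuous fun v : EuclideanSpace ℝ (Fin n) => |v i| :=
        ((EuclideanSpace.proj i).continuous).abs
      have h2 : Continuous fun s : ℝ => s ^ p := by
        rw [continuous_iff_continuousAt]
        intro s
        exact Real.continuousAt_rpow_const s p (Or.inr hp0.le)
      exact h2.comp h1
  have hF0 : ∀ v, 0 ≤ F v := by
    intro v
    rw [hF]
    have hs : 0 ≤ ∑ i, |v i| ^ p :=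
      Finset.sum_nonneg fun i _ => Real.rpow_nonneg (abs_nonneg _) _
    have h1 : (0:ℝ) ≤ ‖A v - b‖ ^ 2 := by positivity
    nlinarith [mul_nonneg hlam.le hs]
  -- tail sums
  set tl : ℕ → ℝ := fun k => ∑' j, ε (j + k) ^ 2 with htl
  have hsumk : ∀ k, Summable fun j => ε (j + k) ^ 2 := fun k => (summable_nat_add_iff k).2 hsum
  have htl0 : ∀ k, 0 ≤ tl k := fun k => tsum_nonneg fun j => sq_nonneg _
  have hrec : ∀ k, tl k = ε k ^ 2 + tl (k + 1) := by
    intro k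
    have h2 : ∀ j : ℕ, ε (j + 1 + k) ^ 2 = ε (j + (k + 1)) ^ 2 := by
      intro j
      have hje : j + 1 + k = j + (k + 1) := by omega
      rw [hje]
    calc tl k = ε (0 + k) ^ 2 + ∑' j, ε (j + 1 + k) ^ 2 := (hsumk k).tsum_eq_zero_add
      _ = ε k ^ 2 + tl (k + 1) := by rw [zero_add]; congr 1; exact tsum_congr h2
  set u : ℕ → ℝ := fun k => F (x k) + tl k with hudef
  have hstep1 : ∀ k, α * ‖x (k + 1) - x k‖ ^ 2 ≤ u k - u (k + 1) := by
    intro k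
    have h1 := hH1 k
    have h2 := hrec k
    simp only [hudef]
    linarith
  have huanti : Antitone u := antitone_nat_of_succ_le fun k => by
    have h1 := hstep1 k
    have h2 : 0 ≤ α * ‖x (k + 1) - x k‖ ^ 2 := by positivity
    linarith
  have hubdd : BddBelow (Set.range u) := by
    refine ⟨0, ?_⟩
    rintro r ⟨k, rfl⟩
    exact add_nonneg (hF0 _) (htl0 _)
  have hulim : Filter.Tendsto u Filter.atTop (nhds (⨅ k, u k)) :=
    tendsto_atTop_ciInf huanti hubdd
  set Lu : ℝ := ⨅ k, u k with hLudef
  have htlim : Filter.Tendsto tl Filter.atTop (nhds 0) := by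
    have hpart : Filter.Tendsto (fun k => ∑ i ∈ Finset.range k, ε i ^ 2) Filter.atTop
        (nhds (∑' i, ε i ^ 2)) := hsum.hasSum.tendsto_sum_nat
    have hdiff : ∀ k, tl k = (∑' i, ε i ^ 2) - ∑ i ∈ Finset.range k, ε i ^ 2 := by
      intro k
      have h3 := hsum.sum_add_tsum_nat_add (f := fun i => ε i ^ 2) k
      simp only [htl]
      linarith
    have h4 : Filter.Tendsto (fun k => (∑' i, ε i ^ 2) - ∑ i ∈ Finset.range k, ε i ^ 2)
        Filter.atTop (nhds ((∑' i, ε i ^ 2) - ∑' i, ε i ^ 2)) := tendsto_const_nhds.sub hpart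
    rw [sub_self] at h4
    have h5 : tl = fun k => (∑' i, ε i ^ 2) - ∑ i ∈ Finset.range k, ε i ^ 2 := funext hdiff
    rw [h5]
    exact h4
  have hFlim : Filter.Tendsto (fun k => F (x k)) Filter.atTop (nhds Lu) := by
    have h1 : Filter.Tendsto (fun k => u k - tl k) Filter.atTop (nhds (Lu - 0)) :=
      hulim.sub htlim
    rw [sub_zero] at h1
    have h2 : (fun k => F (x k)) = fun k => u k - tl k := funext fun k => by
      simp only [hudef]; ring
    rw [h2]
    exact h1
  have hd0 : Filter.Tendsto (fun k => u k - u (k + 1)) Filter.atTop (nhds 0) := by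
    have h1 : Filter.Tendsto (fun k => u (k + 1)) Filter.atTop (nhds Lu) :=
      hulim.comp (tendsto_add_atTop_nat 1)
    have := hulim.sub h1
    rwa [sub_self] at this
  have hsq : Filter.Tendsto (fun k => α * ‖x (k + 1) - x k‖ ^ 2) Filter.atTop (nhds 0) :=
    squeeze_zero (fun k => by positivity) hstep1 hd0
  have hns : Filter.Tendsto (fun k => ‖x (k + 1) - x k‖ ^ 2) Filter.atTop (nhds 0) := by
    have h1 := hsq.const_mul (1 / α)
    rw [mul_zero] at h1
    have h2 : (fun k => 1 / α * (α * ‖x (k + 1) - x k‖ ^ 2)) =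
        fun k => ‖x (k + 1) - x k‖ ^ 2 := funext fun k => by field_simp
    rwa [h2] at h1
  have hstep0 : Filter.Tendsto (fun k => ‖x (k + 1) - x k‖) Filter.atTop (nhds 0) := by
    have h1 := hns.sqrt
    rw [Real.sqrt_zero] at h1
    have h2 : (fun k => Real.sqrt (‖x (k + 1) - x k‖ ^ 2)) =
        fun k => ‖x (k + 1) - x k‖ := funext fun k => Real.sqrt_sq (norm_nonneg _)
    rwa [h2] at h1
  have hLu : Lu = F xs := by
    have h1 : Filter.Tendsto (fun k => F (x (φ k))) Filter.atTop (nhds Lu) :=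
      hFlim.comp hφ.tendsto_atTop
    have h2 : Filter.Tendsto (fun k => F (x (φ k))) Filter.atTop (nhds (F xs)) :=
      (hFc.tendsto xs).comp hxφ
    exact tendsto_nhds_unique h1 h2
  -- local min radius
  obtain ⟨ρ₀, hρ₀pos, hρ₀⟩ : ∃ ρ₀ > 0, ∀ ⦃v⦄, dist v xs < ρ₀ → F xs ≤ F v :=
    Metric.eventually_nhds_iff.1 hmin
  -- lower bound μ for nonzero coordinates of xs
  obtain ⟨μ, hμpos, hμ⟩ : ∃ μ > 0, ∀ i, xs i ≠ 0 → μ ≤ |xs i| := by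
    by_cases hS : (Finset.univ.filter fun i : Fin n => xs i ≠ 0).Nonempty
    · refine ⟨(Finset.univ.filter fun i : Fin n => xs i ≠ 0).inf' hS fun i => |xs i|, ?_, ?_⟩
      · rw [gt_iff_lt, Finset.lt_inf'_iff]
        intro i hi
        rw [Finset.mem_filter] at hi
        exact abs_pos.2 hi.2
      · intro i hi
        exact Finset.inf'_le _ (by rw [Finset.mem_filter]; exact ⟨Finset.mem_univ i, hi⟩)
    · refine ⟨1, one_pos, fun i hi => absurd ?_ hS⟩
      exact ⟨i, by rw [Finset.mem_filter]; exact ⟨Finset.mem_univ i, hi⟩⟩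
  -- uniform lower bound ν for nonzero coordinates of nearby local minima
  obtain ⟨ν, hνpos, hν⟩ : ∃ ν > 0, ∀ w : EuclideanSpace ℝ (Fin n), IsLocalMin F w →
      dist w xs ≤ ρ₀ → ∀ i, w i ≠ 0 → ν ≤ |w i| := by
    set M : ℝ := 2 * ‖A‖ * (‖A‖ * (‖xs‖ + ρ₀) + ‖b‖) + 1 with hM
    have hMpos : 0 < M := by positivity
    set K : ℝ := M / (lam * p) with hK
    have hKpos : 0 < K := div_pos hMpos (by positivity)
    refine ⟨(1 / K) ^ ((1 : ℝ) / (1 - p)), Real.rpow_pos_of_pos (by positivity) _, ?_⟩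
    intro w hwmin hwdist i hwi
    have hb := coord_bound hp0 hp1 hlam A b F hF hwmin i hwi
    have hwnorm : ‖w‖ ≤ ‖xs‖ + ρ₀ := by
      have h1 := norm_sub_norm_le w xs
      have h2 : ‖w - xs‖ = dist w xs := (dist_eq_norm _ _).symm
      linarith [h2 ▸ h1, hwdist]
    have h2 : ‖A w - b‖ ≤ ‖A‖ * (‖xs‖ + ρ₀) + ‖b‖ := by
      calc ‖A w - b‖ ≤ ‖A w‖ + ‖b‖ := norm_sub_le _ _
        _ ≤ ‖A‖ * ‖w‖ + ‖b‖ := by linarith [A.le_opNorm w]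
        _ ≤ ‖A‖ * (‖xs‖ + ρ₀) + ‖b‖ := by
          have := mul_le_mul_of_nonneg_left hwnorm (norm_nonneg A)
          linarith
    have h3 : lam * p * |w i| ^ (p - 1) ≤ M := by
      have h4 : 2 * ‖A‖ * ‖A w - b‖ ≤ 2 * ‖A‖ * (‖A‖ * (‖xs‖ + ρ₀) + ‖b‖) :=
        mul_le_mul_of_nonneg_left h2 (by positivity)
      rw [hM]
      linarith [hb, h4]
    have habs : 0 < |w i| := abs_pos.2 hwi
    have h4 : |w i| ^ (p - 1) ≤ K := by
      rw [hK, le_div_iff₀ (by positivity : (0:ℝ) < lam * p)]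
      linarith [h3, mul_comm (|w i| ^ (p - 1)) (lam * p)]
    have h5 : |w i| ^ (p - 1) = (|w i| ^ ((1 : ℝ) - p))⁻¹ := by
      rw [← Real.rpow_neg habs.le]
      congr 1
      ring
    have hx : 0 < |w i| ^ ((1 : ℝ) - p) := Real.rpow_pos_of_pos habs _
    have h6 : 1 / K ≤ |w i| ^ ((1 : ℝ) - p) := by
      rw [h5] at h4
      have h7 : 1 ≤ K * (|w i| ^ ((1 : ℝ) - p)) := by
        have h8 := mul_le_mul_of_nonneg_right h4 hx.le
        rwa [inv_mul_cancel₀ hx.ne'] at h8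
      rw [div_le_iff₀ hKpos]
      linarith [h7, mul_comm K (|w i| ^ ((1 : ℝ) - p))]
    have h1p : (0:ℝ) < 1 - p := by linarith
    have h8 := Real.rpow_le_rpow (by positivity) h6 (one_div_pos.2 h1p).le
    rwa [← Real.rpow_mul (abs_nonneg (w i)), mul_one_div,
      div_self (by linarith : (1:ℝ) - p ≠ 0), Real.rpow_one] at h8
  -- capture argument
  rw [Metric.tendsto_atTop]
  intro ε₀ hε₀
  set ρ : ℝ := min (min (ε₀ / 2) (ρ₀ / 2)) (min (μ / 4) (ν / 2)) with hρdef
  have hρpos : 0 < ρ :=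
    lt_min (lt_min (by linarith) (by linarith)) (lt_min (by linarith) (by linarith))
  have hρε : ρ ≤ ε₀ / 2 := le_trans (min_le_left _ _) (min_le_left _ _)
  have hρρ₀ : ρ ≤ ρ₀ / 2 := le_trans (min_le_left _ _) (min_le_right _ _)
  have hρμ : ρ ≤ μ / 4 := le_trans (min_le_right _ _) (min_le_left _ _)
  have hρν : ρ ≤ ν / 2 := le_trans (min_le_right _ _) (min_le_right _ _)
  obtain ⟨δ, hδpos, hδ⟩ : ∃ δ > 0, ∀ v, ρ / 2 ≤ dist v xs → dist v xs ≤ ρ → F xs + δ ≤ F v := by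
    have hKcomp : IsCompact (Metric.closedBall xs ρ \ Metric.ball xs (ρ / 2)) :=
      (isCompact_closedBall xs ρ).diff Metric.isOpen_ball
    by_cases hne2 : (Metric.closedBall xs ρ \ Metric.ball xs (ρ / 2)).Nonempty
    · obtain ⟨v0, hv0K, hv0min⟩ := hKcomp.exists_isMinOn hne2 hFc.continuousOn
      have hv0dist : dist v0 xs ≤ ρ := Metric.mem_closedBall.1 hv0K.1
      have hv0dist2 : ρ / 2 ≤ dist v0 xs := by
        by_contra hcon
        push_neg at hcon
        exact hv0K.2 (Metric.mem_ball.2 hcon)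
      have hge : F xs ≤ F v0 := hρ₀ (lt_of_le_of_lt hv0dist (by linarith))
      rcases eq_or_lt_of_le hge with heq | hlt
      · exfalso
        have hv0loc : IsLocalMin F v0 := by
          have hev : ∀ᶠ v in nhds v0, F v0 ≤ F v := by
            rw [Metric.eventually_nhds_iff]
            refine ⟨ρ₀ - ρ, by linarith, ?_⟩
            intro v hv
            have hvd : dist v xs < ρ₀ := by
              calc dist v xs ≤ dist v v0 + dist v0 xs := dist_triangle _ _ _
                _ < (ρ₀ - ρ) + ρ := by linarith [hv0dist, hv]
                _ = ρ₀ := by ring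
            rw [← heq]
            exact hρ₀ hvd
          exact hev
        have hv0ne : v0 ≠ xs := by
          intro hcon
          rw [hcon, dist_self] at hv0dist2
          linarith
        apply no_two_close_minima hp0 hp1 hlam A b F hF hmin hv0loc hv0ne
        intro i hdiff
        have hcoordb : |v0 i - xs i| ≤ dist v0 xs := by
          have h1 := coord_abs_le_norm (v0 - xs) i
          rw [dist_eq_norm]
          exact h1
        have hxsi : xs i ≠ 0 := by
          intro h0
          have hv0i : v0 i ≠ 0 := by
            intro hc
            apply hdiff
            rw [hc, h0, sub_zero]
          have hnub := hν v0 hv0loc (by linarith [hv0dist]) i hv0i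
          have : |v0 i| ≤ ρ := by
            have := hcoordb
            rw [h0, sub_zero] at this
            linarith [hv0dist]
          linarith
        have hμi := hμ i hxsi
        have h2ρ : |v0 i - xs i| ≤ ρ := le_trans hcoordb hv0dist
        linarith
      · refine ⟨F v0 - F xs, by linarith, ?_⟩
        intro v hv1 hv2
        have hvK : v ∈ Metric.closedBall xs ρ \ Metric.ball xs (ρ / 2) := by
          constructor
          · exact Metric.mem_closedBall.2 hv2
          · intro hcon
            exact absurd (Metric.mem_ball.1 hcon) (not_lt.2 hv1)
        have := isMinOn_iff.1 hv0min v hvK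
        linarith
    · refine ⟨1, one_pos, ?_⟩
      intro v hv1 hv2
      exfalso
      apply hne2
      refine ⟨v, ?_, ?_⟩
      · exact Metric.mem_closedBall.2 hv2
      · intro hcon
        exact absurd (Metric.mem_ball.1 hcon) (not_lt.2 hv1)
  rw [hLu] at hFlim
  have hFev : ∀ᶠ k in Filter.atTop, F (x k) < F xs + δ :=
    hFlim.eventually_lt_const (by linarith)
  have hsev : ∀ᶠ k in Filter.atTop, ‖x (k + 1) - x k‖ < ρ / 2 :=
    hstep0.eventually_lt_const (by linarith)
  obtain ⟨N, hN⟩ := Filter.eventually_atTop.1 (hFev.and hsev)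
  obtain ⟨K1, hK1⟩ := Metric.tendsto_atTop.1 hxφ (ρ / 2) (by linarith)
  set N₀ : ℕ := φ (max K1 N) with hN₀
  have hN₀N : N ≤ N₀ := le_trans (le_max_right _ _) hφ.le_apply
  have hstart : dist (x N₀) xs < ρ / 2 := hK1 (max K1 N) (le_max_left _ _)
  have hind : ∀ j, dist (x (N₀ + j)) xs < ρ / 2 := by
    intro j
    induction j with
    | zero => simpa using hstart
    | succ j ih =>
      have hk : N ≤ N₀ + j := le_trans hN₀N (Nat.le_add_right _ _)
      have hk1 : N ≤ N₀ + j + 1 := by omega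
      have hstepb := (hN _ hk).2
      have hdeq : dist (x (N₀ + j + 1)) (x (N₀ + j)) = ‖x (N₀ + j + 1) - x (N₀ + j)‖ :=
        dist_eq_norm _ _
      have htri : dist (x (N₀ + j + 1)) xs < ρ := by
        calc dist (x (N₀ + j + 1)) xs
            ≤ dist (x (N₀ + j + 1)) (x (N₀ + j)) + dist (x (N₀ + j)) xs :=
              dist_triangle _ _ _
          _ < ρ / 2 + ρ / 2 := by rw [hdeq]; exact add_lt_add hstepb ih
          _ = ρ := by ring
      have hgoal : dist (x (N₀ + (j + 1))) xs = dist (x (N₀ + j + 1)) xs := by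
        congr 1
      rw [hgoal]
      by_contra hcon
      push_neg at hcon
      have h6 := hδ (x (N₀ + j + 1)) hcon htri.le
      have h7 := (hN _ hk1).1
      linarith
  refine ⟨N₀, fun k hk => ?_⟩
  obtain ⟨j, rfl⟩ := Nat.exists_eq_add_of_le hk
  have := hind j
  calc dist (x (N₀ + j)) xs < ρ / 2 := this
    _ < ε₀ := by linarith
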